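/- Let X be a loopless graph on n vertices with Laplacian L having greatest eigenvalue μ, and let S be an independent set of size s with characteristic vector z. If equality holds in the bound s = n·(μ − d̄_S)/μ, then L(z − (s/n)·1) = μ·(z − (s/n)·1); consequently every vertex in S has exactly μ(1 − s/n) neighbours outside S, and every vertex outside S has exactly μ·s/n neighbours in S. -/

import Mathlib

open Matrix Finset

/-- Equality in the Laplacian bound: if `s = n(μ − d̄_S)/μ` then `z − (s/n)·1` is a
`μ`-eigenvector of `L`, vertices in `S` have exactly `μ(1 − s/n)` neighbours outside `S`,
and vertices outside `S` have exactly `μ·s/n` neighbours in `S`. -/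
theorem stmt7 (n : ℕ) (hn : 0 < n)
    (A : Matrix (Fin n) (Fin n) ℝ) (hsym : A.IsSymm)
    (h01 : ∀ i j, A i j = 0 ∨ A i j = 1) (hloop : ∀ i, A i i = 0)
    (L : Matrix (Fin n) (Fin n) ℝ)
    (hL : L = Matrix.diagonal (fun i => ∑ j, A i j) - A)
    (μ : ℝ) (hμpos : 0 < μ)
    (hμeig : ∃ v : Fin n → ℝ, v ≠ 0 ∧ L.mulVec v = μ • v)
    (hμmax : ∀ (ν : ℝ) (v : Fin n → ℝ), v ≠ 0 → L.mulVec v = ν • v → ν ≤ μ)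
    (S : Finset (Fin n)) (hSne : S.Nonempty)
    (hind : ∀ i ∈ S, ∀ j ∈ S, i ≠ j → A i j = 0)
    (s : ℕ) (hs : s = S.card)
    (dbar : ℝ) (hdbar : dbar = (∑ i ∈ S, ∑ j, A i j) / s)
    (z : Fin n → ℝ) (hz : z = fun i => if i ∈ S then 1 else 0)
    (heq : (s : ℝ) = n * (μ - dbar) / μ) :
    L.mulVec (z - ((s : ℝ) / n) • ((fun _ => 1) : Fin n → ℝ))
        = μ • (z - ((s : ℝ) / n) • ((fun _ => 1) : Fin n → ℝ))
      ∧ (∀ i ∈ S, ∑ j ∈ Sᶜ, A i j = μ * (1 - (s : ℝ) / n))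
      ∧ (∀ i ∈ Sᶜ, ∑ j ∈ S, A i j = μ * ((s : ℝ) / n)) := by
  classical
  have hn0 : (n : ℝ) ≠ 0 := Nat.cast_ne_zero.mpr hn.ne'
  have hs0 : 0 < s := hs ▸ Finset.card_pos.mpr hSne
  have hsR : (s : ℝ) ≠ 0 := Nat.cast_ne_zero.mpr hs0.ne'
  set c : ℝ := (s : ℝ) / n with hc
  set w : Fin n → ℝ := z - c • ((fun _ => 1) : Fin n → ℝ) with hw
  set d : Fin n → ℝ := fun i => ∑ j, A i j with hd
  -- basic coordinates
  have hwcoord : ∀ i, w i = z i - c := fun i => by simp [hw]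
  have hzS : ∀ i ∈ S, z i = 1 := by intro i hi; simp [hz, hi]
  have hzSc : ∀ i, i ∉ S → z i = 0 := by intro i hi; simp [hz, hi]
  -- independence: row sum over S vanishes for i ∈ S
  have hsS : ∀ i ∈ S, ∑ j ∈ S, A i j = 0 := by
    intro i hi
    refine Finset.sum_eq_zero fun j hj => ?_
    rcases eq_or_ne i j with rfl | hij
    · exact hloop i
    · exact hind i hi j hj hij
  have hdsplit : ∀ i, d i = ∑ j ∈ S, A i j + ∑ j ∈ Sᶜ, A i j := by
    intro i
    rw [hd]
    exact (Finset.sum_add_sum_compl S _).symm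
  -- L z coordinates
  have hLz : ∀ i, (L.mulVec z) i = d i * z i - ∑ j ∈ S, A i j := by
    intro i
    rw [hL]
    simp only [mulVec, dotProduct, Matrix.sub_apply, Matrix.diagonal_apply, sub_mul,
      Finset.sum_sub_distrib]
    congr 1
    · simp [ite_mul, Finset.sum_ite_eq, hd]
    · rw [hz]
      simp only [mul_ite, mul_one, mul_zero]
      rw [Finset.sum_ite_mem, Finset.univ_inter]
  -- L kills the all-ones vector
  have hL1 : L.mulVec (fun _ => (1 : ℝ)) = 0 := by
    funext i
    rw [hL]
    simp only [mulVec, dotProduct, Matrix.sub_apply, Matrix.diagonal_apply, mul_one,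
      Finset.sum_sub_distrib, Pi.zero_apply]
    rw [Finset.sum_ite_eq (Finset.univ : Finset (Fin n)) i (fun _ => ∑ k, A i k)]
    simp
  have hLw : L.mulVec w = L.mulVec z := by
    rw [hw, Matrix.mulVec_sub, Matrix.mulVec_smul, hL1]
    simp
  -- L is symmetric
  have hLsym : L.IsSymm := by
    rw [hL]; exact (Matrix.isSymm_diagonal _).sub hsym
  -- column sums vanish
  have hcol : ∀ j, ∑ i, L i j = 0 := by
    intro j
    have h1 : ∀ i, L i j = L j i := fun i => by
      conv_lhs => rw [← hLsym]
      rfl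
    calc ∑ i, L i j = ∑ i, L j i := by simp_rw [h1]
    _ = (L.mulVec (fun _ => 1)) j := by simp [mulVec, dotProduct]
    _ = 0 := by rw [hL1]; rfl
  -- the key scalar quantities
  have hzsum : ∑ i, z i = (s : ℝ) := by
    rw [hz]
    simp only [Finset.sum_ite_mem, Finset.univ_inter, Finset.sum_const, nsmul_eq_mul, mul_one]
    exact_mod_cast congrArg (Nat.cast (R := ℝ)) hs.symm
  have hzz : ∑ i, z i * z i = (s : ℝ) := by
    rw [← hzsum]
    refine Finset.sum_congr rfl fun i _ => ?_
    rw [hz]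
    by_cases hi : i ∈ S <;> simp [hi]
  have hzLz : z ⬝ᵥ L.mulVec z = ∑ i ∈ S, d i := by
    unfold dotProduct
    rw [show ∑ i, z i * (L.mulVec z) i = ∑ i ∈ S, z i * (L.mulVec z) i by
      refine (Finset.sum_subset (Finset.subset_univ S) fun i _ hi => ?_).symm
      rw [hzSc i hi, zero_mul]]
    refine Finset.sum_congr rfl fun i hi => ?_
    rw [hLz i, hsS i hi, hzS i hi]
    ring
  have honeLz : (fun _ => (1 : ℝ)) ⬝ᵥ L.mulVec z = 0 := by
    unfold dotProduct
    simp only [one_mul, mulVec, dotProduct]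
    rw [Finset.sum_comm]
    refine Finset.sum_eq_zero fun j _ => ?_
    rw [← Finset.sum_mul, hcol j, zero_mul]
  have hww : w ⬝ᵥ w = (s : ℝ) - c * s := by
    unfold dotProduct
    have : ∀ i, w i * w i = z i * z i - 2 * c * z i + c * c := by
      intro i; rw [hwcoord]; ring
    simp_rw [this]
    rw [Finset.sum_add_distrib, Finset.sum_sub_distrib, ← Finset.mul_sum, hzz, hzsum]
    simp only [Finset.sum_const, Finset.card_univ, Fintype.card_fin, nsmul_eq_mul]
    have hnc : (n : ℝ) * c = s := by rw [hc]; field_simp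
    linear_combination c * hnc
  have hwLw : w ⬝ᵥ L.mulVec w = ∑ i ∈ S, d i := by
    rw [hLw, hw, sub_dotProduct, smul_dotProduct, hzLz, honeLz]
    simp
  -- equality case arithmetic
  have hT : (∑ i ∈ S, d i) = dbar * s := by
    rw [hdbar, hd]; field_simp
  have h1 : μ * s = n * μ - n * dbar := by
    have := heq
    field_simp at this
    linarith
  have hTval : (∑ i ∈ S, d i) = μ * ((s : ℝ) - c * s) := by
    rw [hT, hc]
    field_simp
    nlinarith [h1]
  -- positive semidefiniteness of μ•1 - L
  set M : Matrix (Fin n) (Fin n) ℝ := μ • (1 : Matrix (Fin n) (Fin n) ℝ) - L with hM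
  have hMherm : M.IsHermitian := by
    rw [Matrix.IsHermitian, Matrix.conjTranspose_eq_transpose_of_trivial]
    exact ((Matrix.isSymm_one).smul μ).sub hLsym
  have heignn : ∀ i, 0 ≤ hMherm.eigenvalues i := by
    intro i
    set v : Fin n → ℝ := ⇑(hMherm.eigenvectorBasis i) with hv
    have hv0 : v ≠ 0 := by
      intro h
      exact hMherm.eigenvectorBasis.orthonormal.ne_zero i (by ext j; exact congrFun h j)
    have hMv : M.mulVec v = hMherm.eigenvalues i • v := hMherm.mulVec_eigenvectorBasis i
    have hLv : L.mulVec v = (μ - hMherm.eigenvalues i) • v := by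
      have : μ • v - L.mulVec v = hMherm.eigenvalues i • v := by
        rw [← hMv, hM, Matrix.sub_mulVec, Matrix.smul_mulVec, Matrix.one_mulVec]
      funext j
      have := congrFun this j
      simp only [Pi.sub_apply, Pi.smul_apply, smul_eq_mul] at this ⊢
      linarith
    have := hμmax (μ - hMherm.eigenvalues i) v hv0 hLv
    linarith
  have hPSD : M.PosSemidef := hMherm.posSemidef_iff_eigenvalues_nonneg.mpr heignn
  have hquad : star w ⬝ᵥ M.mulVec w = 0 := by
    rw [star_trivial, hM, Matrix.sub_mulVec, Matrix.smul_mulVec, Matrix.one_mulVec,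
      dotProduct_sub, dotProduct_smul, hww, hwLw, hTval]
    simp
  have hMw0 : M.mulVec w = 0 := (hPSD.dotProduct_mulVec_zero_iff w).mp hquad
  have heig : L.mulVec w = μ • w := by
    have : μ • w - L.mulVec w = 0 := by
      rw [← hMw0, hM, Matrix.sub_mulVec, Matrix.smul_mulVec, Matrix.one_mulVec]
    funext j
    have := congrFun this j
    simp only [Pi.sub_apply, Pi.zero_apply, Pi.smul_apply, smul_eq_mul] at this ⊢
    linarith
  refine ⟨heig, ?_, ?_⟩
  · intro i hi
    have h1 := congrFun heig i
    rw [hLw] at h1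
    have h2 : (L.mulVec z) i = d i := by rw [hLz i, hsS i hi, hzS i hi]; ring
    have h3 : (μ • w) i = μ * (1 - c) := by
      simp only [Pi.smul_apply, smul_eq_mul, hwcoord, hzS i hi]
    have h4 : d i = ∑ j ∈ Sᶜ, A i j := by rw [hdsplit i, hsS i hi, zero_add]
    rw [h2, h3, h4] at h1
    exact h1
  · intro i hi
    rw [Finset.mem_compl] at hi
    have h1 := congrFun heig i
    rw [hLw] at h1
    have h2 : (L.mulVec z) i = -∑ j ∈ S, A i j := by rw [hLz i, hzSc i hi]; ring
    have h3 : (μ • w) i = -(μ * c) := by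
      simp only [Pi.smul_apply, smul_eq_mul, hwcoord, hzSc i hi]; ring
    rw [h2, h3] at h1
    linarith
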